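/- arXiv:1002.2388 — 4 statements merged into one kernel-verified Lean document; each statement's English description precedes it below -/
import Mathlib

section
/- For the ideal I = (X_1, X_2)D of D, the product IM satisfies (IM)^v = D, where (IM)^v = (D : (D : IM)) is the divisorial closure of IM. -/
open MvPolynomial FractionalIdeal

noncomputable section

variable (k : Type*) [Field k]

/-- The ideal `N = (X_1, X_2, ...)` of `R = k[X_1, X_2, ...]` generated by all the
indeterminates. -/
def bigN : Ideal (MvPolynomial ℕ k) := Ideal.span (Set.range MvPolynomial.X)

theorem bigN_eq_ker : bigN k = RingHom.ker (constantCoeff (σ := ℕ) (R := k)) := by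
  ext p
  rw [bigN, ← Set.image_univ, mem_ideal_span_X_image, RingHom.mem_ker]
  constructor
  · intro h
    rw [constantCoeff_eq]
    by_contra hc
    obtain ⟨i, _, hi⟩ := h 0 (mem_support_iff.mpr hc)
    simp at hi
  · intro h m hm
    rw [constantCoeff_eq] at h
    have hm0 : m ≠ 0 := by rintro rfl; exact mem_support_iff.mp hm h
    obtain ⟨i, hi⟩ := Finsupp.ne_iff.mp hm0
    exact ⟨i, trivial, by simpa using hi⟩

instance : (bigN k).IsMaximal := by
  rw [bigN_eq_ker]
  exact RingHom.ker_isMaximal_of_surjective _ (fun a => ⟨C a, by simp⟩)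

/-- `D`, the localization of `k[X_1, X_2, ...]` at the maximal ideal `N`. -/
abbrev bigD := Localization.AtPrime (bigN k)

/-- `K`, the fraction field of `D`. -/
abbrev bigK := FractionRing (bigD k)

/-- `M`, the maximal ideal of the local domain `D`. -/
def bigM : Ideal (bigD k) := IsLocalRing.maximalIdeal (bigD k)

attribute [-instance] instAlgebraAtPrimeFractionRing

variable {k}

lemma mvX_prime (n : ℕ) : Prime (X n : MvPolynomial ℕ k) := by
  let e0 : ℕ ≃ Option ℕ := (Denumerable.eqv (Option ℕ)).symm
  let e : ℕ ≃ Option ℕ := e0.trans (Equiv.swap (e0 n) none)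
  have he : e n = none := by simp [e, Equiv.swap_apply_left]
  let E := (renameEquiv k e).trans (optionEquivLeft k ℕ)
  have hE : E (X n) = Polynomial.X := by
    simp [E, he, optionEquivLeft_X_none]
  have hp : Prime (Polynomial.X : Polynomial (MvPolynomial ℕ k)) := Polynomial.prime_X
  rw [← MulEquiv.prime_iff E.toMulEquiv]
  simpa [hE] using hp

lemma mvX_not_dvd_X {n m : ℕ} (h : n ≠ m) : ¬ (X n : MvPolynomial ℕ k) ∣ X m := by
  rintro ⟨q, hq⟩
  have := congrArg (aeval (fun j => if j = n then (0 : k) else 1)) hq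
  simp [h.symm] at this

lemma mvX_not_dvd {t : MvPolynomial ℕ k} (ht : t ∉ bigN k) (n : ℕ) :
    ¬ (X n : MvPolynomial ℕ k) ∣ t := by
  rintro ⟨q, rfl⟩
  exact ht (Ideal.mul_mem_right _ _ (Ideal.subset_span ⟨n, rfl⟩))

/-- The key cancellation step. -/
lemma key_cancel {f g w a b s t : MvPolynomial ℕ k} (hg : g ≠ 0)
    (hs : s ∉ bigN k) (ht : t ∉ bigN k) {n m : ℕ} (hnm : n ≠ m)
    (h1 : f * w * X n * s = a * g) (h2 : f * w * X m * t = b * g) :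
    ∃ c, f * w * s = c * g := by
  have e : (a * t * X m) * g = (b * s * X n) * g := by
    linear_combination (s * X n) * h2 - (t * X m) * h1
  have e2 : a * t * X m = b * s * X n := mul_right_cancel₀ hg e
  have hdvd : (X n : MvPolynomial ℕ k) ∣ a * (t * X m) := ⟨b * s, by linear_combination e2⟩
  rcases (mvX_prime n).dvd_mul.mp hdvd with hda | hda
  · obtain ⟨c, rfl⟩ := hda
    exact ⟨c, mul_left_cancel₀ (X_ne_zero (R := k) n) (by linear_combination h1)⟩
  · rcases (mvX_prime n).dvd_mul.mp hda with hda | hda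
    · exact absurd hda (mvX_not_dvd ht n)
    · exact absurd hda (mvX_not_dvd_X hnm)

set_option maxHeartbeats 2000000 in
set_option synthInstance.maxHeartbeats 1000000 in
/-- For the ideal `I = (X_1, X_2)D` of `D`, `(IM)^v = D`, where `(IM)^v = (D : (D : IM))` is
the divisorial closure. -/
theorem v_of_IM (k : Type*) [Field k] :
    (1 : FractionalIdeal (nonZeroDivisors (bigD k)) (bigK k)) /
      (1 / (((Ideal.span {algebraMap (MvPolynomial ℕ k) (bigD k) (X 1),
                algebraMap (MvPolynomial ℕ k) (bigD k) (X 2)} : Ideal (bigD k)) :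
              FractionalIdeal (nonZeroDivisors (bigD k)) (bigK k)) *
            ((bigM k : Ideal (bigD k)) :
              FractionalIdeal (nonZeroDivisors (bigD k)) (bigK k)))) = 1 := by
  set R := MvPolynomial ℕ k
  set ψ : R →+* bigD k := algebraMap R (bigD k) with hψdef
  set θ : bigD k →+* bigK k := algebraMap (bigD k) (bigK k) with hθdef
  set φ : R →+* bigK k := θ.comp ψ with hφdef
  set I : Ideal (bigD k) := Ideal.span {ψ (X 1), ψ (X 2)} with hIdef
  set J : FractionalIdeal (nonZeroDivisors (bigD k)) (bigK k) := ↑I * ↑(bigM k) with hJdef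
  -- injectivity facts
  have hψinj : Function.Injective ψ := by
    apply IsLocalization.injective (bigD k) (M := (bigN k).primeCompl)
    intro x hx
    exact mem_nonZeroDivisors_of_ne_zero (fun h => hx (h ▸ (bigN k).zero_mem))
  have hθinj : Function.Injective θ := IsFractionRing.injective (bigD k) (bigK k)
  have hφinj : Function.Injective φ := hθinj.comp hψinj
  have hφne : ∀ {p : R}, p ≠ 0 → φ p ≠ 0 := fun {p} hp h =>
    hp (hφinj (by rw [h, _root_.map_zero]))
  have hNne : ∀ {p : R}, p ∉ bigN k → p ≠ 0 := fun {p} hp h =>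
    hp (h ▸ (bigN k).zero_mem)
  -- membership of products X i * X n in J
  have hmem : ∀ i n : ℕ, i = 1 ∨ i = 2 → φ (X i * X n) ∈ J := by
    intro i n hi
    rw [hφdef, RingHom.comp_apply, _root_.map_mul ψ, _root_.map_mul θ]
    refine mul_mem_mul (mem_coeIdeal _ |>.mpr ⟨ψ (X i), ?_, rfl⟩)
      (mem_coeIdeal _ |>.mpr ⟨ψ (X n), ?_, rfl⟩)
    · rcases hi with rfl | rfl
      · exact Ideal.subset_span (Set.mem_insert _ _)
      · exact Ideal.subset_span (Set.mem_insert_of_mem _ rfl)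
    · refine IsLocalRing.mem_maximalIdeal _ |>.mpr (fun h => ?_)
      exact (IsLocalization.AtPrime.isUnit_to_map_iff (bigD k) (bigN k) (X n)).mp h
        (Ideal.subset_span ⟨n, rfl⟩)
  have hJ0 : J ≠ 0 := by
    intro h
    have := hmem 1 3 (Or.inl rfl)
    rw [h] at this
    exact hφne (mul_ne_zero (X_ne_zero 1) (X_ne_zero 3)) ((mem_zero_iff _).mp this)
  -- fraction representation over R
  have frac : ∀ x : bigK k, ∃ f g : R, g ≠ 0 ∧ x * φ g = φ f := by
    intro x
    obtain ⟨⟨d, b⟩, hx⟩ := IsLocalization.surj (nonZeroDivisors (bigD k)) x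
    obtain ⟨⟨fa, sa⟩, ha⟩ := IsLocalization.surj (bigN k).primeCompl d
    obtain ⟨⟨fb, sb⟩, hb⟩ := IsLocalization.surj (bigN k).primeCompl (b : bigD k)
    have hbne : (b : bigD k) ≠ 0 := nonZeroDivisors.ne_zero b.2
    have hfb : fb ≠ 0 := by
      intro h
      rw [h, _root_.map_zero] at hb
      exact (mul_ne_zero hbne (fun hz => hNne sb.2 (hψinj (by rw [hz, _root_.map_zero])))) hb
    refine ⟨fa * sb, fb * sa, mul_ne_zero hfb (hNne sa.2), ?_⟩
    have hb' : θ (b : bigD k) * φ (sb : R) = φ fb := by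
      rw [hφdef, RingHom.comp_apply, RingHom.comp_apply, ← _root_.map_mul θ, hb]
    have ha' : θ d * φ (sa : R) = φ fa := by
      rw [hφdef, RingHom.comp_apply, RingHom.comp_apply, ← _root_.map_mul θ, ha]
    rw [_root_.map_mul, _root_.map_mul]
    linear_combination (φ (sb : R) * φ (sa : R)) * hx - (x * φ (sa : R)) * hb'
      + φ (sb : R) * ha'
  -- main: 1 / J = 1
  have h1J : (1 : FractionalIdeal (nonZeroDivisors (bigD k)) (bigK k)) / J = 1 := by
    refine le_antisymm (fun x hx => ?_) ?_
    · have hx' : ∀ y ∈ J, x * y ∈ (1 : FractionalIdeal (nonZeroDivisors (bigD k)) (bigK k)) :=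
        (mem_div_iff_of_ne_zero hJ0).mp hx
      obtain ⟨f, g, hg, hfg⟩ := frac x
      have stepR : ∀ i n : ℕ, i = 1 ∨ i = 2 →
          ∃ a s : R, s ∉ bigN k ∧ f * X i * X n * s = a * g := by
        intro i n hi
        obtain ⟨d, hd⟩ := (mem_one_iff _).mp (hx' _ (hmem i n hi))
        obtain ⟨⟨a, s⟩, hs⟩ := IsLocalization.surj (bigN k).primeCompl d
        refine ⟨a, s, s.2, hφinj ?_⟩
        have hs' : θ d * φ (s : R) = φ a := by
          rw [hφdef, RingHom.comp_apply, RingHom.comp_apply, ← _root_.map_mul θ, hs]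
        have hd' : θ d = x * (φ (X i) * φ (X n)) := by
          rw [hd, hφdef, RingHom.comp_apply, _root_.map_mul ψ, _root_.map_mul θ]; rfl
        simp only [_root_.map_mul]
        linear_combination (-(φ (X i) * φ (X n) * φ (s : R))) * hfg
          + φ g * hs' - φ g * φ (s : R) * hd'
      obtain ⟨a1, s1, hs1, e1⟩ := stepR 1 3 (Or.inl rfl)
      obtain ⟨b1, t1, ht1, e1'⟩ := stepR 1 4 (Or.inl rfl)
      obtain ⟨c1, ec1⟩ := key_cancel hg hs1 ht1 (by norm_num) e1 e1'
      obtain ⟨a2, s2, hs2, e2⟩ := stepR 2 3 (Or.inr rfl)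
      obtain ⟨b2, t2, ht2, e2'⟩ := stepR 2 4 (Or.inr rfl)
      obtain ⟨c2, ec2⟩ := key_cancel hg hs2 ht2 (by norm_num) e2 e2'
      -- now f * X 1 * s1 = c1 * g and f * X 2 * s2 = c2 * g
      have ec1' : f * 1 * X 1 * s1 = c1 * g := by linear_combination ec1
      have ec2' : f * 1 * X 2 * s2 = c2 * g := by linear_combination ec2
      obtain ⟨c, ec⟩ := key_cancel hg hs1 hs2 (show (1:ℕ) ≠ 2 by norm_num) ec1' ec2'
      -- x = φ c / φ s1
      have hfinal : f * s1 = c * g := by linear_combination ec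
      have hφg : φ g ≠ 0 := hφne hg
      have hφs : φ (s1 : R) ≠ 0 := hφne (hNne hs1)
      set d : bigD k := IsLocalization.mk' (bigD k) c (⟨s1, hs1⟩ : (bigN k).primeCompl)
      have hd : d * ψ s1 = ψ c := IsLocalization.mk'_spec (bigD k) c _
      refine (mem_one_iff _).mpr ⟨d, ?_⟩
      have hxs : x * φ s1 = φ c := by
        apply mul_right_cancel₀ hφg
        calc x * φ s1 * φ g = (x * φ g) * φ s1 := by ring
        _ = φ f * φ s1 := by rw [hfg]
        _ = φ (f * s1) := by rw [_root_.map_mul]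
        _ = φ (c * g) := by rw [hfinal]
        _ = φ c * φ g := by rw [_root_.map_mul]
      apply mul_right_cancel₀ hφs
      rw [hxs]
      rw [hφdef, RingHom.comp_apply, ← _root_.map_mul θ, hd]
      rfl
    · rw [le_div_iff_mul_le hJ0, one_mul, hJdef]
      refine mul_le.mpr (fun i hi j hj => ?_)
      obtain ⟨a, -, rfl⟩ := (mem_coeIdeal _).mp hi
      obtain ⟨b, -, rfl⟩ := (mem_coeIdeal _).mp hj
      exact (mem_one_iff _).mpr ⟨a * b, by rw [_root_.map_mul]⟩
  rw [h1J, FractionalIdeal.div_one]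
end
end

section
/- Let (D, M) be a local integral domain with fraction field K and let A be a nonzero proper ideal of D with A^v = D. Then for every nonzero y ∈ K with A ⊆ yM, either D ⊆ yM or yM = M. -/
open FractionalIdeal

section Aux

variable {R : Type*} [CommRing R] [IsDomain R] {K : Type*} [Field K] [Algebra R K]
  [IsFractionRing R K]

lemma aux_one_div_anti {I J : FractionalIdeal (nonZeroDivisors R) K} (hI : I ≠ 0)
    (h : I ≤ J) : 1 / J ≤ 1 / I := by
  rw [le_div_iff_mul_le hI]
  calc 1 / J * I ≤ 1 / J * J := mul_right_mono h
    _ = J * (1 / J) := mul_comm _ _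
    _ ≤ 1 := mul_one_div_le_one

lemma aux_one_div_spanSingleton_mul (y : K) (hy : y ≠ 0)
    (I : FractionalIdeal (nonZeroDivisors R) K) (hI : I ≠ 0) :
    1 / (spanSingleton (nonZeroDivisors R) y * I) =
      spanSingleton (nonZeroDivisors R) y⁻¹ * (1 / I) := by
  have hS : spanSingleton (nonZeroDivisors R) y ≠ 0 :=
    fun h => hy (spanSingleton_eq_zero_iff.mp h)
  have hSS : spanSingleton (nonZeroDivisors R) y⁻¹ * spanSingleton (nonZeroDivisors R) y
      = 1 := by
    rw [spanSingleton_mul_spanSingleton, inv_mul_cancel₀ hy, spanSingleton_one]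
  have hSI : spanSingleton (nonZeroDivisors R) y * I ≠ 0 := by
    intro h
    apply hI
    have h2 : spanSingleton (nonZeroDivisors R) y⁻¹ *
        (spanSingleton (nonZeroDivisors R) y * I) = 0 := by rw [h, mul_zero]
    rwa [← mul_assoc, hSS, one_mul] at h2
  apply le_antisymm
  · have key : spanSingleton (nonZeroDivisors R) y *
        (1 / (spanSingleton (nonZeroDivisors R) y * I)) ≤ 1 / I := by
      rw [le_div_iff_mul_le hI, mul_assoc, mul_comm (1 / _) I, ← mul_assoc]
      exact mul_one_div_le_one
    calc 1 / (spanSingleton (nonZeroDivisors R) y * I)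
        = spanSingleton (nonZeroDivisors R) y⁻¹ *
            (spanSingleton (nonZeroDivisors R) y *
              (1 / (spanSingleton (nonZeroDivisors R) y * I))) := by
          rw [← mul_assoc, hSS, one_mul]
      _ ≤ spanSingleton (nonZeroDivisors R) y⁻¹ * (1 / I) := mul_right_mono key
  · rw [le_div_iff_mul_le hSI]
    calc spanSingleton (nonZeroDivisors R) y⁻¹ * (1 / I) *
          (spanSingleton (nonZeroDivisors R) y * I)
        = spanSingleton (nonZeroDivisors R) y⁻¹ * spanSingleton (nonZeroDivisors R) y *
            (I * (1 / I)) := by ring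
      _ = I * (1 / I) := by rw [hSS, one_mul]
      _ ≤ 1 := mul_one_div_le_one

end Aux

/-- Let `(D, M)` be a local integral domain with fraction field `K` and `A` a nonzero proper
ideal of `D` with `A^v = D`.  Then for every nonzero `y ∈ K` with `A ⊆ yM`, either `D ⊆ yM`
or `yM = M`. -/
theorem contained_in_yM (D : Type*) [CommRing D] [IsDomain D] [IsLocalRing D]
    (A : Ideal D) (hA0 : A ≠ ⊥) (hAtop : A ≠ ⊤)
    (hAv : (1 : FractionalIdeal (nonZeroDivisors D) (FractionRing D)) /
        (1 / (A : FractionalIdeal (nonZeroDivisors D) (FractionRing D))) = 1)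
    (y : FractionRing D) (hy : y ≠ 0)
    (hAyM : (A : FractionalIdeal (nonZeroDivisors D) (FractionRing D)) ≤
        spanSingleton (nonZeroDivisors D) y *
          (IsLocalRing.maximalIdeal D : FractionalIdeal (nonZeroDivisors D) (FractionRing D))) :
    (1 : FractionalIdeal (nonZeroDivisors D) (FractionRing D)) ≤
        spanSingleton (nonZeroDivisors D) y *
          (IsLocalRing.maximalIdeal D : FractionalIdeal (nonZeroDivisors D) (FractionRing D)) ∨
      spanSingleton (nonZeroDivisors D) y *
          (IsLocalRing.maximalIdeal D : FractionalIdeal (nonZeroDivisors D) (FractionRing D)) =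
        (IsLocalRing.maximalIdeal D :
          FractionalIdeal (nonZeroDivisors D) (FractionRing D)) := by
  classical
  set S : FractionalIdeal (nonZeroDivisors D) (FractionRing D) :=
    spanSingleton (nonZeroDivisors D) y with hS_def
  set M' : FractionalIdeal (nonZeroDivisors D) (FractionRing D) :=
    (IsLocalRing.maximalIdeal D : FractionalIdeal (nonZeroDivisors D) (FractionRing D))
    with hM'_def
  have hA' : (A : FractionalIdeal (nonZeroDivisors D) (FractionRing D)) ≠ 0 := by
    rwa [ne_eq, coeIdeal_eq_zero]
  have hS0 : S ≠ 0 := by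
    rw [hS_def]
    exact fun h => hy (spanSingleton_eq_zero_iff.mp h)
  have hM0 : M' ≠ 0 := by
    intro h
    apply hA'
    have h2 := hAyM
    rw [h, mul_zero] at h2
    exact le_antisymm h2 (zero_le _)
  have hM'le1 : M' ≤ 1 := coeIdeal_le_one
  have h1leDM : (1 : FractionalIdeal (nonZeroDivisors D) (FractionRing D)) ≤ 1 / M' := by
    rw [le_div_iff_mul_le hM0, one_mul]; exact hM'le1
  have hDM0 : (1 : FractionalIdeal (nonZeroDivisors D) (FractionRing D)) / M' ≠ 0 := by
    intro h
    rw [h] at h1leDM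
    exact one_ne_zero (le_antisymm h1leDM (zero_le _))
  set Mv : FractionalIdeal (nonZeroDivisors D) (FractionRing D) := 1 / (1 / M') with hMv_def
  have hMvle1 : Mv ≤ 1 := by
    have h := aux_one_div_anti
      (I := (1 : FractionalIdeal (nonZeroDivisors D) (FractionRing D)))
      (J := 1 / M') one_ne_zero h1leDM
    rw [FractionalIdeal.div_one] at h
    exact h
  have hM'leMv : M' ≤ Mv := by
    rw [hMv_def, le_div_iff_mul_le hDM0]
    exact mul_one_div_le_one
  have hkey : (1 : FractionalIdeal (nonZeroDivisors D) (FractionRing D)) ≤ S * Mv := by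
    have h1 : 1 / (S * M') ≤
        1 / (A : FractionalIdeal (nonZeroDivisors D) (FractionRing D)) :=
      aux_one_div_anti hA' hAyM
    have hSM : 1 / (S * M') = spanSingleton (nonZeroDivisors D) y⁻¹ * (1 / M') :=
      aux_one_div_spanSingleton_mul y hy M' hM0
    have hSMne : 1 / (S * M') ≠ 0 := by
      rw [hSM]
      intro h
      apply hDM0
      have h2 : spanSingleton (nonZeroDivisors D) y *
          (spanSingleton (nonZeroDivisors D) y⁻¹ * (1 / M')) = 0 := by rw [h, mul_zero]
      rwa [← mul_assoc, spanSingleton_mul_spanSingleton, mul_inv_cancel₀ hy,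
        spanSingleton_one, one_mul] at h2
    have h2 : 1 / (1 / (A : FractionalIdeal (nonZeroDivisors D) (FractionRing D))) ≤
        1 / (1 / (S * M')) := aux_one_div_anti hSMne h1
    rw [hAv] at h2
    have h3 : 1 / (1 / (S * M')) = S * Mv := by
      rw [hSM, aux_one_div_spanSingleton_mul y⁻¹ (inv_ne_zero hy) _ hDM0, inv_inv]
    rwa [h3] at h2
  obtain ⟨J, hJ⟩ := le_one_iff_exists_coeIdeal.mp hMvle1
  have hMJ : IsLocalRing.maximalIdeal D ≤ J := by
    rw [← coeIdeal_le_coeIdeal (FractionRing D), hJ]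
    exact hM'leMv
  by_cases hJtop : J = ⊤
  · have hMv1 : Mv = 1 := by rw [← hJ, hJtop]; simp
    rw [hMv1, mul_one] at hkey
    have h1S : (1 : FractionRing D) ∈ S := FractionalIdeal.one_le.mp hkey
    obtain ⟨d, hd⟩ := (mem_spanSingleton _).mp h1S
    rw [Algebra.smul_def] at hd
    by_cases hdM : d ∈ IsLocalRing.maximalIdeal D
    · left
      rw [FractionalIdeal.one_le]
      have h2 : (1 : FractionRing D) = y * algebraMap D (FractionRing D) d := by
        rw [mul_comm]; exact hd.symm
      rw [h2]
      exact mul_mem_mul (mem_spanSingleton_self _ y)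
        ((mem_coeIdeal _).mpr ⟨d, hdM, rfl⟩)
    · right
      have hdu : IsUnit d := by
        by_contra h
        exact hdM (IsLocalRing.mem_maximalIdeal d |>.mpr h)
      obtain ⟨u, rfl⟩ := hdu
      have hyval : y = algebraMap D (FractionRing D) ((u⁻¹ : Dˣ) : D) := by
        have h2 : algebraMap D (FractionRing D) ((u⁻¹ : Dˣ) : D) *
            (algebraMap D (FractionRing D) (u : D) * y) =
            algebraMap D (FractionRing D) ((u⁻¹ : Dˣ) : D) * 1 := by rw [hd]
        rwa [← mul_assoc, ← _root_.map_mul, Units.inv_mul, _root_.map_one, one_mul,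
          mul_one] at h2
      have hSle1 : S ≤ 1 := by
        rw [hS_def, spanSingleton_le_iff_mem, hyval]
        exact (mem_one_iff _).mpr ⟨_, rfl⟩
      have hSinvle1 : spanSingleton (nonZeroDivisors D) y⁻¹ ≤ 1 := by
        rw [spanSingleton_le_iff_mem, inv_eq_of_mul_eq_one_left hd]
        exact (mem_one_iff _).mpr ⟨_, rfl⟩
      apply le_antisymm
      · calc S * M' ≤ 1 * M' := mul_left_mono hSle1
          _ = M' := one_mul _
      · have hSS : S * spanSingleton (nonZeroDivisors D) y⁻¹ = 1 := by
          rw [hS_def, spanSingleton_mul_spanSingleton, mul_inv_cancel₀ hy, spanSingleton_one]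
        calc M' = S * spanSingleton (nonZeroDivisors D) y⁻¹ * M' := by rw [hSS, one_mul]
          _ = S * (spanSingleton (nonZeroDivisors D) y⁻¹ * M') := mul_assoc _ _ _
          _ ≤ S * (1 * M') := mul_right_mono (mul_left_mono hSinvle1)
          _ = S * M' := by rw [one_mul]
  · left
    have hJM : J = IsLocalRing.maximalIdeal D :=
      ((IsLocalRing.maximalIdeal.isMaximal D).eq_of_le hJtop hMJ).symm
    have hMvM : Mv = M' := by rw [← hJ, hJM]
    rwa [hMvM] at hkey
end

section
/- Let (D, M) be a local integral domain with fraction field K and let A be a nonzero proper ideal of D with A^v = D and A ⊆ M². Then for every nonzero z ∈ K with A ⊆ zM², either zM² = M² or M ⊆ zM². -/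
open FractionalIdeal

/-- Let `(D, M)` be a local integral domain with fraction field `K` and `A` a nonzero proper
ideal of `D` with `A^v = D` and `A ⊆ M²`.  Then for every nonzero `z ∈ K` with `A ⊆ zM²`,
either `zM² = M²` or `M ⊆ zM²`. -/
theorem contained_in_zM2 (D : Type*) [CommRing D] [IsDomain D] [IsLocalRing D]
    (A : Ideal D) (hA0 : A ≠ ⊥) (hAtop : A ≠ ⊤)
    (hAv : (1 : FractionalIdeal (nonZeroDivisors D) (FractionRing D)) /
        (1 / (A : FractionalIdeal (nonZeroDivisors D) (FractionRing D))) = 1)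
    (hAM2 : A ≤ IsLocalRing.maximalIdeal D ^ 2)
    (z : FractionRing D) (hz : z ≠ 0)
    (hAzM2 : (A : FractionalIdeal (nonZeroDivisors D) (FractionRing D)) ≤
        spanSingleton (nonZeroDivisors D) z *
          (IsLocalRing.maximalIdeal D :
            FractionalIdeal (nonZeroDivisors D) (FractionRing D)) ^ 2) :
    spanSingleton (nonZeroDivisors D) z *
          (IsLocalRing.maximalIdeal D :
            FractionalIdeal (nonZeroDivisors D) (FractionRing D)) ^ 2 =
        (IsLocalRing.maximalIdeal D :
          FractionalIdeal (nonZeroDivisors D) (FractionRing D)) ^ 2 ∨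
      (IsLocalRing.maximalIdeal D : FractionalIdeal (nonZeroDivisors D) (FractionRing D)) ≤
        spanSingleton (nonZeroDivisors D) z *
          (IsLocalRing.maximalIdeal D :
            FractionalIdeal (nonZeroDivisors D) (FractionRing D)) ^ 2 := by
  set Mf : FractionalIdeal (nonZeroDivisors D) (FractionRing D) :=
    (IsLocalRing.maximalIdeal D : FractionalIdeal (nonZeroDivisors D) (FractionRing D)) with hMf
  set F : FractionalIdeal (nonZeroDivisors D) (FractionRing D) := (A : FractionalIdeal (nonZeroDivisors D) (FractionRing D))
    with hF
  have hF0 : F ≠ 0 := by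
    rw [hF, Ne, coeIdeal_eq_zero]; exact hA0
  have hzz : spanSingleton (nonZeroDivisors D) z * spanSingleton (nonZeroDivisors D) z⁻¹
      = 1 := by
    rw [spanSingleton_mul_spanSingleton, mul_inv_cancel₀ hz, spanSingleton_one]
  have hM2le : Mf ^ 2 ≤ 1 := by
    rw [hMf, ← coeIdeal_pow]; exact coeIdeal_le_one
  have hzinvF : spanSingleton (nonZeroDivisors D) z⁻¹ * F ≤ 1 := by
    calc spanSingleton (nonZeroDivisors D) z⁻¹ * F
        ≤ spanSingleton (nonZeroDivisors D) z⁻¹ *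
            (spanSingleton (nonZeroDivisors D) z * Mf ^ 2) := mul_right_mono hAzM2
      _ = Mf ^ 2 := by
          rw [← mul_assoc, spanSingleton_mul_spanSingleton, inv_mul_cancel₀ hz,
            spanSingleton_one, one_mul]
      _ ≤ 1 := hM2le
  have h1F : (1 : FractionalIdeal (nonZeroDivisors D) (FractionRing D)) / F = 1 := by
    refine le_antisymm ?_ ((le_div_iff_mul_le hF0).mpr (by rw [one_mul]; exact coeIdeal_le_one))
    have h1le : (1 : FractionalIdeal (nonZeroDivisors D) (FractionRing D)) ≤ 1 / F :=
      (le_div_iff_mul_le hF0).mpr (by rw [one_mul]; exact coeIdeal_le_one)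
    have hd0 : (1 : FractionalIdeal (nonZeroDivisors D) (FractionRing D)) / F ≠ 0 := by
      intro h
      rw [h] at h1le
      exact hF0 (le_antisymm ((coeIdeal_le_one (S := nonZeroDivisors D)).trans h1le) (zero_le _))
    have := hAv.ge
    rw [le_div_iff_mul_le hd0, one_mul] at this
    exact this
  have hzinv_mem : z⁻¹ ∈ (1 : FractionalIdeal (nonZeroDivisors D) (FractionRing D)) := by
    rw [← h1F]
    exact spanSingleton_le_iff_mem.mp ((le_div_iff_mul_le hF0).mpr hzinvF)
  obtain ⟨d, hd⟩ := (mem_one_iff _).mp hzinv_mem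
  by_cases hu : IsUnit d
  · left
    have hsz : spanSingleton (nonZeroDivisors D) z⁻¹ = 1 := by
      rw [← hd, ← coeIdeal_span_singleton, Ideal.span_singleton_eq_top.mpr hu, coeIdeal_top]
    have : spanSingleton (nonZeroDivisors D) z = 1 := by
      have := hzz
      rwa [hsz, mul_one] at this
    rw [this, one_mul]
  · right
    have hdM : d ∈ IsLocalRing.maximalIdeal D := hu
    have key : spanSingleton (nonZeroDivisors D) z⁻¹ * Mf ≤ Mf ^ 2 := by
      rw [← hd, ← coeIdeal_span_singleton, hMf, ← coeIdeal_mul, ← coeIdeal_pow]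
      rw [coeIdeal_le_coeIdeal (FractionRing D), sq]
      exact Ideal.mul_mono ((Ideal.span_singleton_le_iff_mem _).mpr hdM) le_rfl
    calc Mf = spanSingleton (nonZeroDivisors D) z *
            (spanSingleton (nonZeroDivisors D) z⁻¹ * Mf) := by
          rw [← mul_assoc, hzz, one_mul]
      _ ≤ spanSingleton (nonZeroDivisors D) z * Mf ^ 2 := mul_right_mono key
end

section
/- For the ideal I = (X_1, X_2)D of D, the intersection of all fractional ideals J ∈ 𝒥 containing I equals M; that is, I^∗ = M, where E^∗ := ⋂{J ∈ 𝒥 : E ⊆ J}. -/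
open MvPolynomial FractionalIdeal

set_option synthInstance.maxHeartbeats 1000000
set_option maxHeartbeats 1000000

noncomputable section

variable (k : Type*) [Field k]

attribute [local instance high] Algebra.toModule

/-- The maximal ideal `M` of `D`, viewed as a fractional ideal of `D`. -/
def bigMF : FractionalIdeal (nonZeroDivisors (bigD k)) (bigK k) :=
  ((bigM k : Ideal (bigD k)) : FractionalIdeal (nonZeroDivisors (bigD k)) (bigK k))

/-- The set `𝒥` of all fractional ideals of `D` of the form `xD`, `yM` or `zM²`, with
`x, y, z` nonzero elements of `K` (viewed as `D`-submodules of `K`). -/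
def Jset : Set (Submodule (bigD k) (bigK k)) :=
  {J | ∃ x : bigK k, x ≠ 0 ∧
    (J = Submodule.span (bigD k) {x} ∨
     J = Submodule.span (bigD k) {x} * (bigMF k : Submodule (bigD k) (bigK k)) ∨
     J = Submodule.span (bigD k) {x} * (bigMF k : Submodule (bigD k) (bigK k)) ^ 2)}

/-- The operation `E^∗ := ⋂ {J ∈ 𝒥 : E ⊆ J}`. -/
def starJ (E : Submodule (bigD k) (bigK k)) : Submodule (bigD k) (bigK k) :=
  sInf {J | J ∈ Jset k ∧ E ≤ J}

lemma X_mem_bigN (i : ℕ) : X i ∈ bigN k := Ideal.subset_span ⟨i, rfl⟩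

lemma prime_X_R (i : ℕ) : Prime (X i : MvPolynomial ℕ k) := by
  have h0 : Prime (Polynomial.X : Polynomial k) := Polynomial.prime_X
  let e : MvPolynomial ({i} : Set ℕ) k ≃ₐ[k] Polynomial k :=
    (renameEquiv k (Equiv.equivPUnit.{1,1} ({i} : Set ℕ))).trans (pUnitAlgEquiv k)
  have h1 : Prime (X (⟨i, rfl⟩ : ({i} : Set ℕ)) : MvPolynomial ({i} : Set ℕ) k) := by
    rw [← MulEquiv.prime_iff e]
    convert h0 using 2
    simp [e, pUnitAlgEquiv]
  have h2 := (prime_rename_iff ({i} : Set ℕ)).2 h1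
  rwa [rename_X] at h2

lemma not_dvd_X12 : ¬ (X 1 : MvPolynomial ℕ k) ∣ X 2 := by
  rintro ⟨t, ht⟩
  have h := congrArg (eval (fun j => if j = 1 then 0 else 1)) ht
  simp at h

lemma injRD : Function.Injective (algebraMap (MvPolynomial ℕ k) (bigD k)) :=
  IsLocalization.injective _ (bigN k).primeCompl_le_nonZeroDivisors

lemma not_X_dvd_primeCompl (i : ℕ) (s : (bigN k).primeCompl) :
    ¬ (X i : MvPolynomial ℕ k) ∣ (s : MvPolynomial ℕ k) := by
  rintro ⟨t, ht⟩
  exact s.2 ((bigN_eq_ker k).symm.le (RingHom.mem_ker.mpr (by rw [ht]; simp)))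

lemma prime_X1_D : Prime (algebraMap (MvPolynomial ℕ k) (bigD k) (X 1)) := by
  have hp : Prime (X 1 : MvPolynomial ℕ k) := prime_X_R k 1
  have hX : (X 1 : MvPolynomial ℕ k) ≠ 0 := hp.ne_zero
  have hsp : (Ideal.span {(X 1 : MvPolynomial ℕ k)}).IsPrime :=
    (Ideal.span_singleton_prime hX).2 hp
  have hdisj : Disjoint ((bigN k).primeCompl : Set (MvPolynomial ℕ k))
      ((Ideal.span {(X 1 : MvPolynomial ℕ k)} : Ideal (MvPolynomial ℕ k)) : Set (MvPolynomial ℕ k)) := by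
    rw [Set.disjoint_left]
    intro a ha hb
    exact ha (Ideal.span_le.2 (Set.singleton_subset_iff.2 (X_mem_bigN k 1)) hb)
  have hmap : (Ideal.map (algebraMap (MvPolynomial ℕ k) (bigD k))
      (Ideal.span {(X 1 : MvPolynomial ℕ k)})).IsPrime :=
    IsLocalization.isPrime_of_isPrime_disjoint (bigN k).primeCompl _ _ hsp hdisj
  rw [Ideal.map_span, Set.image_singleton] at hmap
  have hne : algebraMap (MvPolynomial ℕ k) (bigD k) (X 1) ≠ 0 := fun h =>
    hX (injRD k (by rw [h, _root_.map_zero]))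
  exact (Ideal.span_singleton_prime hne).1 hmap

lemma not_dvd_X12_D :
    ¬ (algebraMap (MvPolynomial ℕ k) (bigD k) (X 1) ∣
        algebraMap (MvPolynomial ℕ k) (bigD k) (X 2)) := by
  rintro ⟨d, hd⟩
  obtain ⟨⟨r, s⟩, hr⟩ := IsLocalization.surj (bigN k).primeCompl d
  have h1 : algebraMap (MvPolynomial ℕ k) (bigD k) (X 2 * (s : MvPolynomial ℕ k)) =
      algebraMap (MvPolynomial ℕ k) (bigD k) (X 1 * r) := by
    simp only [_root_.map_mul]
    rw [hd, ← hr]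
    ring
  have h2 : (X 2 : MvPolynomial ℕ k) * (s : MvPolynomial ℕ k) = X 1 * r := injRD k h1
  rcases (prime_X_R k 1).2.2 (X 2) s ⟨r, h2⟩ with h | h
  · exact not_dvd_X12 k h
  · exact not_X_dvd_primeCompl k 1 s h

lemma finsupp_split (m n : ℕ →₀ ℕ) (h : m + n = Finsupp.single 1 1) : m = 0 ∨ n = 0 := by
  have key : ∀ j, m j + n j = (if 1 = j then 1 else 0) := by
    intro j
    have := DFunLike.congr_fun h j
    simpa [Finsupp.single_apply] using this
  by_cases hm : m 1 = 0
  · left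
    ext j
    rcases eq_or_ne j 1 with rfl | hj
    · simpa using hm
    · have := key j
      rw [if_neg (fun hh => hj hh.symm)] at this
      simpa using by omega
  · right
    ext j
    rcases eq_or_ne j 1 with rfl | hj
    · have := key 1
      rw [if_pos rfl] at this
      simpa using by omega
    · have := key j
      rw [if_neg (fun hh => hj hh.symm)] at this
      simpa using by omega

lemma coeff_single_one_eq_zero_of_mem_sq {p : MvPolynomial ℕ k} (hp : p ∈ bigN k ^ 2) :
    coeff (Finsupp.single 1 1) p = 0 := by
  rw [sq] at hp
  refine Submodule.mul_induction_on hp ?_ ?_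
  · intro a ha b hb
    rw [bigN_eq_ker, RingHom.mem_ker] at ha hb
    classical
    rw [coeff_mul]
    apply Finset.sum_eq_zero
    rintro ⟨m, n⟩ hmn
    rw [Finset.HasAntidiagonal.mem_antidiagonal] at hmn
    rcases finsupp_split m n hmn with rfl | rfl
    · have : coeff 0 a = 0 := by rwa [← constantCoeff_eq]
      simp [this]
    · have : coeff 0 b = 0 := by rwa [← constantCoeff_eq]
      simp [this]
  · intro x y hx hy
    rw [coeff_add, hx, hy, add_zero]

lemma X1_not_mem_M_sq :
    algebraMap (MvPolynomial ℕ k) (bigD k) (X 1) ∉ (IsLocalRing.maximalIdeal (bigD k)) ^ 2 := by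
  intro h
  rw [← Localization.AtPrime.map_eq_maximalIdeal, ← Ideal.map_pow,
    IsLocalization.mem_map_algebraMap_iff (bigN k).primeCompl] at h
  obtain ⟨⟨⟨a, haN⟩, s⟩, hs⟩ := h
  have h1 : (X 1 : MvPolynomial ℕ k) * (s : MvPolynomial ℕ k) = a := by
    apply injRD k
    simpa only [_root_.map_mul] using hs
  have h2 : coeff (Finsupp.single 1 1) ((X 1 : MvPolynomial ℕ k) * (s : MvPolynomial ℕ k)) = 0 := by
    rw [h1]
    exact coeff_single_one_eq_zero_of_mem_sq k haN
  have h3 : constantCoeff (s : MvPolynomial ℕ k) = 0 := by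
    have := coeff_X_mul 0 1 (s : MvPolynomial ℕ k)
    rw [add_zero] at this
    rw [this] at h2
    rwa [constantCoeff_eq]
  exact s.2 ((bigN_eq_ker k).symm.le (RingHom.mem_ker.mpr h3))

instance : IsFractionRing (bigD k) (bigK k) := by
  have h : @algebraMap (bigD k) (bigK k) _ _ (instAlgebraAtPrimeFractionRing (bigD k)) =
      @algebraMap (bigD k) (bigK k) _ _ OreLocalization.instAlgebra := by
    apply IsLocalization.ringHom_ext (bigN k).primeCompl
    ext x
    all_goals simp [RingHom.algebraMap_toAlgebra]
    all_goals rfl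
  have e : instAlgebraAtPrimeFractionRing (bigD k) = OreLocalization.instAlgebra :=
    Algebra.algebra_ext _ _ (fun r => congrArg (· r) h)
  rw [e]
  exact Localization.isLocalization

lemma injDK : Function.Injective (algebraMap (bigD k) (bigK k)) :=
  IsFractionRing.injective _ _

lemma exists_inv (x : bigK k)
    (h1 : algebraMap (bigD k) (bigK k) (algebraMap (MvPolynomial ℕ k) (bigD k) (X 1)) ∈
      Submodule.span (bigD k) {x})
    (h2 : algebraMap (bigD k) (bigK k) (algebraMap (MvPolynomial ℕ k) (bigD k) (X 2)) ∈
      Submodule.span (bigD k) {x}) :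
    ∃ c : bigD k, algebraMap (bigD k) (bigK k) c * x = 1 := by
  obtain ⟨a, ha⟩ := Submodule.mem_span_singleton.1 h1
  obtain ⟨b, hb⟩ := Submodule.mem_span_singleton.1 h2
  have hD : b * algebraMap (MvPolynomial ℕ k) (bigD k) (X 1) =
      a * algebraMap (MvPolynomial ℕ k) (bigD k) (X 2) := by
    apply injDK k
    simp only [_root_.map_mul]
    rw [← ha, ← hb, Algebra.smul_def, Algebra.smul_def]
    ring
  have hdvd : algebraMap (MvPolynomial ℕ k) (bigD k) (X 1) ∣ a := by
    rcases (prime_X1_D k).2.2 a (algebraMap (MvPolynomial ℕ k) (bigD k) (X 2))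
        ⟨b, by rw [← hD]; ring⟩ with h | h
    · exact h
    · exact absurd h (not_dvd_X12_D k)
  obtain ⟨c, hc⟩ := hdvd
  refine ⟨c, ?_⟩
  have hX1ne : algebraMap (bigD k) (bigK k)
      (algebraMap (MvPolynomial ℕ k) (bigD k) (X 1)) ≠ 0 := by
    intro h
    have h0 : algebraMap (MvPolynomial ℕ k) (bigD k) (X 1) = 0 :=
      injDK k (by rw [h, _root_.map_zero])
    exact (prime_X_R k 1).ne_zero (injRD k (by rw [h0, _root_.map_zero]))
  apply mul_left_cancel₀ hX1ne
  rw [mul_one, ← mul_assoc, ← _root_.map_mul, ← hc, ← Algebra.smul_def, ha]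

/-- For the ideal `I = (X_1, X_2)D` of `D`, `I^∗ = M` where
`E^∗ := ⋂ {J ∈ 𝒥 : E ⊆ J}`. -/
theorem starJ_I_eq_M :
    starJ k (((Ideal.span {algebraMap (MvPolynomial ℕ k) (bigD k) (X 1),
          algebraMap (MvPolynomial ℕ k) (bigD k) (X 2)} : Ideal (bigD k)) :
            FractionalIdeal (nonZeroDivisors (bigD k)) (bigK k)) :
              Submodule (bigD k) (bigK k)) =
      (bigMF k : Submodule (bigD k) (bigK k)) := by
  set I : Ideal (bigD k) := Ideal.span {algebraMap (MvPolynomial ℕ k) (bigD k) (X 1),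
    algebraMap (MvPolynomial ℕ k) (bigD k) (X 2)} with hI
  have hMF : bigMF k = ((bigM k : Ideal (bigD k)) :
      FractionalIdeal (nonZeroDivisors (bigD k)) (bigK k)) := rfl
  have hILE : I ≤ bigM k := by
    rw [hI, bigM, Ideal.span_le]
    rintro y (rfl | rfl)
    · exact (IsLocalization.AtPrime.to_map_mem_maximal_iff _ (bigN k) _).2 (X_mem_bigN k 1)
    · exact (IsLocalization.AtPrime.to_map_mem_maximal_iff _ (bigN k) _).2 (X_mem_bigN k 2)
  have hx1A : algebraMap (bigD k) (bigK k) (algebraMap (MvPolynomial ℕ k) (bigD k) (X 1)) ∈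
      ((I : FractionalIdeal (nonZeroDivisors (bigD k)) (bigK k)) : Submodule (bigD k) (bigK k)) := by
    rw [FractionalIdeal.mem_coe]
    exact FractionalIdeal.mem_coeIdeal_of_mem _ (Ideal.subset_span (Set.mem_insert _ _))
  have hx2A : algebraMap (bigD k) (bigK k) (algebraMap (MvPolynomial ℕ k) (bigD k) (X 2)) ∈
      ((I : FractionalIdeal (nonZeroDivisors (bigD k)) (bigK k)) : Submodule (bigD k) (bigK k)) := by
    rw [FractionalIdeal.mem_coe]
    exact FractionalIdeal.mem_coeIdeal_of_mem _
      (Ideal.subset_span (Set.mem_insert_of_mem _ rfl))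
  have hMle1 : (bigMF k : Submodule (bigD k) (bigK k)) ≤ 1 := by
    have h := FractionalIdeal.coe_le_coe.2
      (show bigMF k ≤ 1 from hMF ▸ FractionalIdeal.coeIdeal_le_one)
    rwa [FractionalIdeal.coe_one] at h
  rw [starJ]
  apply le_antisymm
  · apply sInf_le
    refine ⟨⟨1, one_ne_zero, Or.inr (Or.inl ?_)⟩, ?_⟩
    · rw [← Submodule.one_eq_span, one_mul]
    · rw [hMF]
      exact FractionalIdeal.coe_le_coe.2
        ((FractionalIdeal.coeIdeal_le_coeIdeal (bigK k)).2 hILE)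
  · apply le_sInf
    rintro J ⟨⟨x, hx0, hJ⟩, hAJ⟩
    have hMsqle1 : (bigMF k : Submodule (bigD k) (bigK k)) ^ 2 ≤ 1 := by
      rw [sq]
      calc (bigMF k : Submodule (bigD k) (bigK k)) * (bigMF k : Submodule (bigD k) (bigK k))
          ≤ 1 * 1 := mul_le_mul' hMle1 hMle1
        _ = 1 := one_mul 1
    have hspan : ((I : FractionalIdeal (nonZeroDivisors (bigD k)) (bigK k)) :
        Submodule (bigD k) (bigK k)) ≤ Submodule.span (bigD k) {x} := by
      rcases hJ with rfl | rfl | rfl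
      · exact hAJ
      · refine hAJ.trans ?_
        calc Submodule.span (bigD k) {x} * (bigMF k : Submodule (bigD k) (bigK k))
            ≤ Submodule.span (bigD k) {x} * 1 := mul_le_mul' le_rfl hMle1
          _ = _ := mul_one _
      · refine hAJ.trans ?_
        calc Submodule.span (bigD k) {x} * (bigMF k : Submodule (bigD k) (bigK k)) ^ 2
            ≤ Submodule.span (bigD k) {x} * 1 := mul_le_mul' le_rfl hMsqle1
          _ = _ := mul_one _
    obtain ⟨c, hc⟩ := exists_inv k x (hspan hx1A) (hspan hx2A)
    rcases hJ with rfl | rfl | rfl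
    · intro z hz
      rw [FractionalIdeal.mem_coe, hMF, FractionalIdeal.mem_coeIdeal] at hz
      obtain ⟨d, hdM, rfl⟩ := hz
      exact Submodule.mem_span_singleton.2 ⟨d * c,
        by rw [Algebra.smul_def, _root_.map_mul, mul_assoc, hc, mul_one]⟩
    · intro z hz
      have hzeq : z = x * (algebraMap (bigD k) (bigK k) c * z) := by
        rw [← mul_assoc, mul_comm x, hc, one_mul]
      have hm := Submodule.mul_mem_mul (Submodule.mem_span_singleton_self x)
        (Submodule.smul_mem (bigMF k : Submodule (bigD k) (bigK k)) c hz)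
      rw [Algebra.smul_def] at hm
      rwa [← hzeq] at hm
    · have hkey : algebraMap (bigD k) (bigK k) c *
          algebraMap (bigD k) (bigK k) (algebraMap (MvPolynomial ℕ k) (bigD k) (X 1)) ∈
          (bigMF k : Submodule (bigD k) (bigK k)) ^ 2 := by
        refine Submodule.mul_induction_on (hAJ hx1A) ?_ ?_
        · intro s hs t ht
          obtain ⟨d, rfl⟩ := Submodule.mem_span_singleton.1 hs
          letI : SMul (bigD k) (bigK k) := Algebra.toSMul
          have heq : algebraMap (bigD k) (bigK k) c * (d • x * t) = d • t := by
            rw [Algebra.smul_def, Algebra.smul_def]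
            calc algebraMap (bigD k) (bigK k) c * (algebraMap (bigD k) (bigK k) d * x * t)
                = algebraMap (bigD k) (bigK k) d * (algebraMap (bigD k) (bigK k) c * x * t) := by
                  ring
              _ = algebraMap (bigD k) (bigK k) d * t := by rw [← mul_assoc, hc, mul_one]
          rw [heq]
          exact Submodule.smul_mem _ d ht
        · intro u v hu hv
          rw [mul_add]
          exact add_mem hu hv
      have hsq : ((bigMF k : Submodule (bigD k) (bigK k)) ^ 2) =
          (((bigM k ^ 2 : Ideal (bigD k)) :
            FractionalIdeal (nonZeroDivisors (bigD k)) (bigK k)) :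
              Submodule (bigD k) (bigK k)) := by
        rw [← FractionalIdeal.coe_pow]
        congr 1
        rw [sq, sq, FractionalIdeal.coeIdeal_mul, hMF]
      rw [hsq, FractionalIdeal.mem_coe, ← _root_.map_mul,
        FractionalIdeal.mem_coeIdeal] at hkey
      obtain ⟨e, heM, hee⟩ := hkey
      have hcc : c * algebraMap (MvPolynomial ℕ k) (bigD k) (X 1) ∈ bigM k ^ 2 := by
        rwa [injDK k hee] at heM
      have hcM : c ∈ bigM k := by
        by_contra hcu
        have hu : IsUnit c := by
          rwa [bigM, IsLocalRing.mem_maximalIdeal, mem_nonunits_iff, not_not] at hcu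
        have : algebraMap (MvPolynomial ℕ k) (bigD k) (X 1) ∈ bigM k ^ 2 :=
          (Ideal.unit_mul_mem_iff_mem _ hu).1 hcc
        rw [bigM] at this
        exact X1_not_mem_M_sq k this
      intro z hz
      have hzeq : z = x * (algebraMap (bigD k) (bigK k) c * z) := by
        rw [← mul_assoc, mul_comm x, hc, one_mul]
      have hmem : algebraMap (bigD k) (bigK k) c * z ∈
          (bigMF k : Submodule (bigD k) (bigK k)) ^ 2 := by
        rw [sq]
        refine Submodule.mul_mem_mul ?_ hz
        rw [FractionalIdeal.mem_coe, hMF]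
        exact FractionalIdeal.mem_coeIdeal_of_mem _ hcM
      have hfin := Submodule.mul_mem_mul (Submodule.mem_span_singleton_self x) hmem
      rwa [← hzeq] at hfin
end
end
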